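/- Let m and n be coprime positive integers. Then C_{m,n}(q,t) = C_{n,m}(q,t); indeed, there is a bijection between (m,n)-Dyck paths and (n,m)-Dyck paths preserving both the area and dinv statistics. -/

import Mathlib

open MvPolynomial

/-- An `(m,n)`-Dyck path: a north/east lattice path from `(0,0)` to `(m,n)` staying
weakly above the diagonal `y = (n/m)x`.  Such a path is encoded by recording, for each
of the `m` columns (indexed `0,…,m-1` from left to right), the number of cells of that
column lying above the path; this gives an antitone sequence, and the diagonal
condition for the east step in column `i` reads `m * c i ≤ n * (m - 1 - i)`. -/
def DyckPath (m n : ℕ) : Type :=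
  {c : Fin m → Fin (n + 1) //
    (∀ i j : Fin m, i ≤ j → (c j : ℕ) ≤ (c i : ℕ)) ∧
      ∀ i : Fin m, m * (c i : ℕ) ≤ n * (m - 1 - (i : ℕ))}

noncomputable instance instFintypeDyckPath (m n : ℕ) : Fintype (DyckPath m n) := by
  classical
  unfold DyckPath
  infer_instance

namespace DyckPath

variable {m n : ℕ}

/-- `λ(Π)`, the set of cells of the `m × n` lattice lying above the path `Π`.
The cell `(i, j)` (with `i : Fin m`, `j : Fin n`) is the cell in column `i + 1`
(from the left) and row `j + 1` (from the bottom) in the paper's 1-based indexing. -/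
def cellsAbove (P : DyckPath m n) : Set (Fin m × Fin n) :=
  {x | n - (P.1 x.1 : ℕ) ≤ (x.2 : ℕ)}

/-- `arm(x)`: the number of cells of `λ(Π)` strictly east of `x` (in the row of `x`). -/
noncomputable def arm (P : DyckPath m n) (x : Fin m × Fin n) : ℕ :=
  {y ∈ P.cellsAbove | x.1 < y.1 ∧ y.2 = x.2}.ncard

/-- `leg(x)`: the number of cells of `λ(Π)` strictly south of `x` (in the column of `x`). -/
noncomputable def leg (P : DyckPath m n) (x : Fin m × Fin n) : ℕ :=
  {y ∈ P.cellsAbove | y.1 = x.1 ∧ y.2 < x.2}.ncard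

end DyckPath

/-- The dinv condition `arm/(leg+1) < m/n < (arm+1)/leg` for a cell with given arm `a`
and leg `l`, the right inequality being interpreted as true when `l = 0`. -/
def dinvCond (m n a l : ℕ) : Prop :=
  (a : ℚ) / ((l : ℚ) + 1) < (m : ℚ) / (n : ℚ) ∧
    (l = 0 ∨ (m : ℚ) / (n : ℚ) < ((a : ℚ) + 1) / (l : ℚ))

namespace DyckPath

variable {m n : ℕ}

/-- `dinv(Π)`: the number of cells `x ∈ λ(Π)` with
`arm(x)/(leg(x)+1) < m/n < (arm(x)+1)/leg(x)`. -/
noncomputable def dinv (P : DyckPath m n) : ℕ :=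
  {x ∈ P.cellsAbove | dinvCond m n (P.arm x) (P.leg x)}.ncard

/-- `area(Π)`: the number of cells of the lattice lying entirely between the path and
the diagonal, i.e. cells lying entirely weakly above the diagonal `y = (n/m)x` and
below the path. -/
noncomputable def area (P : DyckPath m n) : ℕ :=
  {x : Fin m × Fin n | n * ((x.1 : ℕ) + 1) ≤ m * (x.2 : ℕ) ∧ x ∉ P.cellsAbove}.ncard

end DyckPath

/-- The `(m,n)`-rational `q,t`-Catalan polynomial `C_{m,n}(q,t)`, with `q = X 0` and
`t = X 1`:  `C_{m,n}(q,t) = Σ_Π q^{dinv(Π)} t^{area(Π)}` over all `(m,n)`-Dyck paths. -/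
noncomputable def ratCatalan (m n : ℕ) : MvPolynomial (Fin 2) ℤ :=
  ∑ P : DyckPath m n, X 0 ^ P.dinv * X 1 ^ P.area

/-- The rank of the cell `(i, j)` of the `3 × n` lattice: in the paper's 1-based
coordinates `(a, b) = (i+1, j+1)`, this is `R(a,b) = -a·n + 3(b-1)`. -/
def cellRank (n : ℕ) (x : Fin 3 × Fin n) : ℤ :=
  3 * (x.2 : ℤ) - ((x.1 : ℤ) + 1) * (n : ℤ)

/-- The set of positive ranks of the `3 × n` lattice: these, in increasing order, are
the entries of the rank word. -/
def posRank (n : ℕ) : Set ℤ :=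
  {r | 0 < r ∧ ∃ x : Fin 3 × Fin n, cellRank n x = r}

/-- The set of marked ranks of a `(3,n)`-Dyck path: the ranks of the cells above
the path. -/
def markedRank {n : ℕ} (P : DyckPath 3 n) : Set ℤ :=
  cellRank n '' P.cellsAbove

/-- `skips(Π)`: the number of skips of `Π`, i.e. of maximal blocks of consecutive
unmarked entries of the rank word of `Π` having at least one marked entry to the left
and at least one marked entry to the right.  Each such block is counted through its
rightmost entry `r`: `r` is an unmarked entry, some marked entry lies to its left, and
the next entry of the rank word after `r` is marked. -/
noncomputable def DyckPath.skips {n : ℕ} (P : DyckPath 3 n) : ℕ :=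
  {r : ℤ | r ∈ posRank n ∧ r ∉ markedRank P ∧
    (∃ l ∈ markedRank P, l < r) ∧
    ∃ s ∈ markedRank P, r < s ∧ ∀ t ∈ posRank n, r < t → s ≤ t}.ncard


section ConjAux

open Finset

lemma card_filter_val_lt' (n t : ℕ) (ht : t ≤ n) :
    #((univ : Finset (Fin n)).filter (fun k : Fin n => (k : ℕ) < t)) = t := by
  have h : ((univ : Finset (Fin n)).filter (fun k : Fin n => (k : ℕ) < t)) =
      (range t).attachFin (fun m hm => lt_of_lt_of_le (mem_range.mp hm) ht) := by
    ext k
    simp [mem_attachFin]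
  rw [h, card_attachFin, card_range]

variable {m n : ℕ}

/-- The conjugate (transposed) Dyck path. -/
def DyckPath.conj (P : DyckPath m n) : DyckPath n m :=
  ⟨fun k => ⟨#((univ : Finset (Fin m)).filter (fun i => (k : ℕ) + 1 ≤ (P.1 i : ℕ))),
      Nat.lt_succ_of_le (le_trans (card_filter_le _ _) (by simp))⟩, by
    constructor
    · intro k k' hkk'
      dsimp only
      apply card_le_card
      intro i hi
      simp only [mem_filter, mem_univ, true_and] at hi ⊢
      omega
    · intro k
      set d := #((univ : Finset (Fin m)).filter (fun i => (k : ℕ) + 1 ≤ (P.1 i : ℕ))) with hd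
      simp only
      rw [← hd]
      have hdm : d ≤ m := le_trans (card_filter_le _ _) (by simp)
      rcases Nat.eq_zero_or_pos d with h0 | h1
      · simp [h0]
      · have him : d - 1 < m := by omega
        set i : Fin m := ⟨d - 1, him⟩ with hi
        have hmem : i ∈ (univ : Finset (Fin m)).filter
            (fun i => (k : ℕ) + 1 ≤ (P.1 i : ℕ)) := by
          by_contra hc
          have hsub : (univ : Finset (Fin m)).filter (fun i => (k : ℕ) + 1 ≤ (P.1 i : ℕ))
              ⊆ (univ : Finset (Fin m)).filter (fun j : Fin m => (j : ℕ) < d - 1) := by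
            intro j hj
            simp only [mem_filter, mem_univ, true_and] at hj hc ⊢
            by_contra hj2
            have : i ≤ j := by
              have hiv : (i : ℕ) = d - 1 := rfl
              rw [Fin.le_def, hiv]; omega
            exact hc (le_trans hj (P.2.1 i j this))
          have := card_le_card hsub
          rw [card_filter_val_lt' m (d - 1) (by omega)] at this
          omega
        simp only [mem_filter, mem_univ, true_and] at hmem
        have hP := P.2.2 i
        have hiv : (i : ℕ) = d - 1 := rfl
        rw [hiv] at hP
        have hc1 : (P.1 i : ℕ) ≤ n := by omega
        have hkn : (k : ℕ) < n := k.2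
        have key : m * ((k : ℕ) + 1) ≤ n * (m - d) := by
          calc m * ((k : ℕ) + 1) ≤ m * (P.1 i : ℕ) := by
                exact Nat.mul_le_mul_left m hmem
            _ ≤ n * (m - 1 - (d - 1)) := hP
            _ = n * (m - d) := by congr 1; omega
        rw [Nat.sub_sub]
        have h1 : 1 + (k : ℕ) ≤ n := by omega
        zify [hdm, h1] at key ⊢
        nlinarith [key]⟩

lemma DyckPath.lt_conj_iff (P : DyckPath m n) (k : Fin n) (i : Fin m) :
    (i : ℕ) < (P.conj.1 k : ℕ) ↔ (k : ℕ) + 1 ≤ (P.1 i : ℕ) := by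
  show (i : ℕ) < #((univ : Finset (Fin m)).filter (fun i => (k : ℕ) + 1 ≤ (P.1 i : ℕ))) ↔ _
  constructor
  · intro h
    by_contra hc
    have hsub : (univ : Finset (Fin m)).filter (fun i => (k : ℕ) + 1 ≤ (P.1 i : ℕ))
        ⊆ (univ : Finset (Fin m)).filter (fun j : Fin m => (j : ℕ) < (i : ℕ)) := by
      intro j hj
      simp only [mem_filter, mem_univ, true_and] at hj ⊢
      by_contra hj2
      have : i ≤ j := by rw [Fin.le_def]; omega
      exact hc (le_trans hj (P.2.1 i j this))
    have := card_le_card hsub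
    rw [card_filter_val_lt' m (i : ℕ) (le_of_lt i.2)] at this
    omega
  · intro h
    have hsub : (univ : Finset (Fin m)).filter (fun j : Fin m => (j : ℕ) < (i : ℕ) + 1)
        ⊆ (univ : Finset (Fin m)).filter (fun j => (k : ℕ) + 1 ≤ (P.1 j : ℕ)) := by
      intro j hj
      simp only [mem_filter, mem_univ, true_and] at hj ⊢
      have : j ≤ i := by rw [Fin.le_def]; omega
      exact le_trans h (P.2.1 j i this)
    have := card_le_card hsub
    rw [card_filter_val_lt' m ((i : ℕ) + 1) i.2] at this
    omega

lemma DyckPath.conj_conj (P : DyckPath m n) : P.conj.conj = P := by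
  apply Subtype.ext
  funext i
  apply Fin.ext
  show #((univ : Finset (Fin n)).filter (fun k => (i : ℕ) + 1 ≤ (P.conj.1 k : ℕ))) = _
  have h : ((univ : Finset (Fin n)).filter (fun k => (i : ℕ) + 1 ≤ (P.conj.1 k : ℕ)))
      = (univ : Finset (Fin n)).filter (fun k : Fin n => (k : ℕ) < (P.1 i : ℕ)) := by
    ext k
    simp only [mem_filter, mem_univ, true_and]
    rw [show (i:ℕ) + 1 ≤ (P.conj.1 k : ℕ) ↔ (i:ℕ) < (P.conj.1 k : ℕ) from Iff.rfl,
      P.lt_conj_iff k i]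
    omega
  rw [h, card_filter_val_lt' n _ (by omega)]

/-- Conjugation as an equivalence. -/
def DyckPath.conjEquiv (m n : ℕ) : DyckPath m n ≃ DyckPath n m :=
  ⟨DyckPath.conj, DyckPath.conj, DyckPath.conj_conj, DyckPath.conj_conj⟩

/-- The cell flip. -/
def flipCell (m n : ℕ) : Fin m × Fin n ≃ Fin n × Fin m :=
  ⟨fun x => (x.2.rev, x.1.rev), fun x => (x.2.rev, x.1.rev),
    fun x => by simp, fun x => by simp⟩

lemma DyckPath.mem_cellsAbove_conj (P : DyckPath m n) (x : Fin m × Fin n) :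
    flipCell m n x ∈ P.conj.cellsAbove ↔ x ∈ P.cellsAbove := by
  obtain ⟨i, j⟩ := x
  show m - (P.conj.1 j.rev : ℕ) ≤ (i.rev : ℕ) ↔ n - (P.1 i : ℕ) ≤ (j : ℕ)
  have hdm : (P.conj.1 j.rev : ℕ) ≤ m := by omega
  have hcn : (P.1 i : ℕ) ≤ n := by omega
  have hi := i.2
  have hj := j.2
  have hrev_i : (i.rev : ℕ) = m - 1 - (i : ℕ) := by rw [Fin.val_rev]; omega
  have hrev_j : (j.rev : ℕ) = n - 1 - (j : ℕ) := by rw [Fin.val_rev]; omega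
  rw [hrev_i]
  have key := P.lt_conj_iff j.rev i
  rw [hrev_j] at key
  omega

lemma dinvCond_iff_nat {m n : ℕ} (hm : 0 < m) (hn : 0 < n) (a l : ℕ) :
    dinvCond m n a l ↔ (n * a < m * (l + 1) ∧ m * l < n * (a + 1)) := by
  have hn' : (0 : ℚ) < n := by exact_mod_cast hn
  have hm' : (0 : ℚ) < m := by exact_mod_cast hm
  unfold dinvCond
  constructor
  · rintro ⟨h1, h2⟩
    rw [div_lt_div_iff₀ (by positivity) hn'] at h1
    constructor
    · have : (↑n * ↑a : ℚ) < ↑m * (↑l + 1) := by nlinarith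
      exact_mod_cast this
    · rcases h2 with h2 | h2
      · subst h2; positivity
      · rcases Nat.eq_zero_or_pos l with hl | hl
        · subst hl; positivity
        · have hl' : (0 : ℚ) < l := by exact_mod_cast hl
          rw [div_lt_div_iff₀ hn' hl'] at h2
          have : (↑m * ↑l : ℚ) < ↑n * (↑a + 1) := by nlinarith
          exact_mod_cast this
  · rintro ⟨h1, h2⟩
    constructor
    · rw [div_lt_div_iff₀ (by positivity) hn']
      have h1' : (↑n * ↑a : ℚ) < ↑m * (↑l + 1) := by exact_mod_cast h1
      nlinarith
    · rcases Nat.eq_zero_or_pos l with hl | hl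
      · exact Or.inl hl
      · right
        have hl' : (0 : ℚ) < l := by exact_mod_cast hl
        rw [div_lt_div_iff₀ hn' hl']
        have h2' : (↑m * ↑l : ℚ) < ↑n * (↑a + 1) := by exact_mod_cast h2
        nlinarith

lemma dinvCond_swap {m n : ℕ} (hm : 0 < m) (hn : 0 < n) (a l : ℕ) :
    dinvCond n m l a ↔ dinvCond m n a l := by
  rw [dinvCond_iff_nat hn hm, dinvCond_iff_nat hm hn]
  tauto

lemma DyckPath.arm_conj (P : DyckPath m n) (x : Fin m × Fin n) :
    P.conj.arm (flipCell m n x) = P.leg x := by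
  unfold DyckPath.arm DyckPath.leg
  have h : {y ∈ P.conj.cellsAbove | (flipCell m n x).1 < y.1 ∧ y.2 = (flipCell m n x).2}
      = flipCell m n '' {y ∈ P.cellsAbove | y.1 = x.1 ∧ y.2 < x.2} := by
    rw [Equiv.image_eq_preimage_symm]
    ext y
    simp only [Set.mem_setOf_eq, Set.mem_preimage]
    have hy : flipCell m n ((flipCell m n).symm y) = y := (flipCell m n).apply_symm_apply y
    rw [show ((flipCell m n).symm y ∈ P.cellsAbove
        ↔ flipCell m n ((flipCell m n).symm y) ∈ P.conj.cellsAbove) from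
      (P.mem_cellsAbove_conj _).symm, hy]
    simp only [flipCell, Equiv.coe_fn_mk, Equiv.coe_fn_symm_mk]
    have hx1 := x.1.2
    have hx2 := x.2.2
    have hy1 := y.1.2
    have hy2 := y.2.2
    simp only [Fin.lt_def, Fin.ext_iff, Fin.val_rev]
    constructor <;> rintro ⟨h1, h2, h3⟩ <;> exact ⟨h1, by omega, by omega⟩
  rw [h, Set.ncard_image_of_injective _ (flipCell m n).injective]

lemma DyckPath.leg_conj (P : DyckPath m n) (x : Fin m × Fin n) :
    P.conj.leg (flipCell m n x) = P.arm x := by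
  unfold DyckPath.arm DyckPath.leg
  have h : {y ∈ P.conj.cellsAbove | y.1 = (flipCell m n x).1 ∧ y.2 < (flipCell m n x).2}
      = flipCell m n '' {y ∈ P.cellsAbove | x.1 < y.1 ∧ y.2 = x.2} := by
    rw [Equiv.image_eq_preimage_symm]
    ext y
    simp only [Set.mem_setOf_eq, Set.mem_preimage]
    have hy : flipCell m n ((flipCell m n).symm y) = y := (flipCell m n).apply_symm_apply y
    rw [show ((flipCell m n).symm y ∈ P.cellsAbove
        ↔ flipCell m n ((flipCell m n).symm y) ∈ P.conj.cellsAbove) from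
      (P.mem_cellsAbove_conj _).symm, hy]
    simp only [flipCell, Equiv.coe_fn_mk, Equiv.coe_fn_symm_mk]
    have hx1 := x.1.2
    have hx2 := x.2.2
    have hy1 := y.1.2
    have hy2 := y.2.2
    simp only [Fin.lt_def, Fin.ext_iff, Fin.val_rev]
    constructor <;> rintro ⟨h1, h2, h3⟩ <;> exact ⟨h1, by omega, by omega⟩
  rw [h, Set.ncard_image_of_injective _ (flipCell m n).injective]

lemma DyckPath.area_conj (hm : 0 < m) (hn : 0 < n) (P : DyckPath m n) :
    P.conj.area = P.area := by
  unfold DyckPath.area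
  have h : {y : Fin n × Fin m | m * ((y.1 : ℕ) + 1) ≤ n * (y.2 : ℕ) ∧ y ∉ P.conj.cellsAbove}
      = flipCell m n ''
        {x : Fin m × Fin n | n * ((x.1 : ℕ) + 1) ≤ m * (x.2 : ℕ) ∧ x ∉ P.cellsAbove} := by
    rw [Equiv.image_eq_preimage_symm]
    ext y
    simp only [Set.mem_setOf_eq, Set.mem_preimage]
    have hy : flipCell m n ((flipCell m n).symm y) = y := (flipCell m n).apply_symm_apply y
    rw [show ((flipCell m n).symm y ∈ P.cellsAbove
        ↔ flipCell m n ((flipCell m n).symm y) ∈ P.conj.cellsAbove) from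
      (P.mem_cellsAbove_conj _).symm, hy]
    simp only [flipCell, Equiv.coe_fn_symm_mk]
    obtain ⟨k, l⟩ := y
    simp only
    have hk := k.2
    have hl := l.2
    have h1 : ((l.rev : Fin m) : ℕ) = m - 1 - (l : ℕ) := by rw [Fin.val_rev]; omega
    have h2 : ((k.rev : Fin n) : ℕ) = n - 1 - (k : ℕ) := by rw [Fin.val_rev]; omega
    rw [h1, h2]
    have harith : m * ((k : ℕ) + 1) ≤ n * (l : ℕ) ↔
        n * ((m - 1 - (l : ℕ)) + 1) ≤ m * (n - 1 - (k : ℕ)) := by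
      have e1 : (m - 1 - (l : ℕ)) + 1 = m - (l : ℕ) := by omega
      have e2 : n - 1 - (k : ℕ) = n - (1 + (k : ℕ)) := by omega
      rw [e1, e2]
      have hlm : (l : ℕ) ≤ m := by omega
      have hkn : 1 + (k : ℕ) ≤ n := by omega
      zify [hlm, hkn]
      constructor <;> intro <;> nlinarith
    tauto
  rw [h, Set.ncard_image_of_injective _ (flipCell m n).injective]

lemma DyckPath.dinv_conj (hm : 0 < m) (hn : 0 < n) (P : DyckPath m n) :
    P.conj.dinv = P.dinv := by
  unfold DyckPath.dinv
  have h : {y ∈ P.conj.cellsAbove | dinvCond n m (P.conj.arm y) (P.conj.leg y)}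
      = flipCell m n '' {x ∈ P.cellsAbove | dinvCond m n (P.arm x) (P.leg x)} := by
    rw [Equiv.image_eq_preimage_symm]
    ext y
    simp only [Set.mem_setOf_eq, Set.mem_preimage]
    have hy : flipCell m n ((flipCell m n).symm y) = y := (flipCell m n).apply_symm_apply y
    rw [show ((flipCell m n).symm y ∈ P.cellsAbove
        ↔ flipCell m n ((flipCell m n).symm y) ∈ P.conj.cellsAbove) from
      (P.mem_cellsAbove_conj _).symm, hy]
    rw [show P.arm ((flipCell m n).symm y) = P.conj.leg y by
        rw [← P.leg_conj ((flipCell m n).symm y), hy],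
      show P.leg ((flipCell m n).symm y) = P.conj.arm y by
        rw [← P.arm_conj ((flipCell m n).symm y), hy]]
    rw [dinvCond_swap hm hn]
  rw [h, Set.ncard_image_of_injective _ (flipCell m n).injective]

end ConjAux

/-- For coprime positive integers `m` and `n`,
`C_{m,n}(q,t) = C_{n,m}(q,t)`; indeed, there is a bijection between `(m,n)`-Dyck paths
and `(n,m)`-Dyck paths preserving both the area and dinv statistics. -/
theorem ratCatalan_symm_mn (m n : ℕ) (hm : 0 < m) (hn : 0 < n)
    (hco : Nat.Coprime m n) :
    ratCatalan m n = ratCatalan n m ∧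
      ∃ e : DyckPath m n ≃ DyckPath n m,
        ∀ P : DyckPath m n, (e P).area = P.area ∧ (e P).dinv = P.dinv := by
  constructor
  · unfold ratCatalan
    apply Fintype.sum_equiv (DyckPath.conjEquiv m n)
    intro P
    show _ = X 0 ^ P.conj.dinv * X 1 ^ P.conj.area
    rw [DyckPath.dinv_conj hm hn P, DyckPath.area_conj hm hn P]
  · exact ⟨DyckPath.conjEquiv m n, fun P =>
      ⟨DyckPath.area_conj hm hn P, DyckPath.dinv_conj hm hn P⟩⟩
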